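/- Let 1 ≤ j ≤ n and let T¹ and T² be two L_j partial tour subgraphs such that a_j has the same degree parity (zero, odd, or even positive) in both, b_j has the same degree parity in both, and, after deleting all vertices of degree zero, either both have no connected component, or both have a single connected component containing at least one of a_j and b_j, or both have two connected components with a_j in one and b_j in the other. Then T¹ and T² are equivalent: for every subgraph C of G − L_j, T¹ ∪ C is a tour subgraph of G if and only if T² ∪ C is a tour subgraph of G. -/

import Mathlib

/-- Degree parity class of a vertex: degree zero, odd degree, or even positive degree. -/
inductive DegClass : Type
  | zero : DegClass
  | odd : DegClass
  | evenPos : DegClass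
deriving DecidableEq

/-- The parity class of a natural number (a degree). -/
def degClass (d : ℕ) : DegClass :=
  if d = 0 then .zero else if d % 2 = 1 then .odd else .evenPos

/-- Names of the six vertical edge configurations. -/
inductive VCName : Type
  | onepass : VCName
  | top : VCName
  | bottom : VCName
  | gap : VCName
  | twopass : VCName
  | none : VCName
deriving DecidableEq

/-- Names of the five horizontal edge configurations. -/
inductive HCName : Type
  | h11 : HCName
  | h20 : HCName
  | h02 : HCName
  | h22 : HCName
  | h00 : HCName
deriving DecidableEq

/-- Number of copies of the back cross-aisle edge `a_j a_{j+1}` in a horizontal configuration. -/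
def hcA : HCName → ℕ
  | .h11 => 1
  | .h20 => 2
  | .h02 => 0
  | .h22 => 2
  | .h00 => 0

/-- Number of copies of the front cross-aisle edge `b_j b_{j+1}` in a horizontal configuration. -/
def hcB : HCName → ℕ
  | .h11 => 1
  | .h20 => 0
  | .h02 => 2
  | .h22 => 2
  | .h00 => 0

/-- The seven equivalence classes, as triples (parity of `a_j`, parity of `b_j`, #components). -/
def cUU1C : DegClass × DegClass × ℕ := (.odd, .odd, 1)
def c0E1C : DegClass × DegClass × ℕ := (.zero, .evenPos, 1)
def cE01C : DegClass × DegClass × ℕ := (.evenPos, .zero, 1)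
def cEE1C : DegClass × DegClass × ℕ := (.evenPos, .evenPos, 1)
def cEE2C : DegClass × DegClass × ℕ := (.evenPos, .evenPos, 2)
def c000C : DegClass × DegClass × ℕ := (.zero, .zero, 0)
def c001C : DegClass × DegClass × ℕ := (.zero, .zero, 1)

/-- A single-block parallel-aisle warehouse in the sense of Ratliff and Rosenthal:
`n ≥ 1` vertical pick aisles, two horizontal cross-aisles, `picks j` pick vertices
strictly inside aisle `j`, nonnegative edge lengths, and a depot located at some
cross-aisle vertex `a_j` (if `depotTop`) or `b_j`. -/
structure Warehouse where
  n : ℕ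
  npos : 1 ≤ n
  picks : Fin n → ℕ
  vlen : (j : Fin n) → Fin (picks j + 1) → ℝ
  hlenA : Fin (n - 1) → ℝ
  hlenB : Fin (n - 1) → ℝ
  vlen_nonneg : ∀ j i, 0 ≤ vlen j i
  hlenA_nonneg : ∀ k, 0 ≤ hlenA k
  hlenB_nonneg : ∀ k, 0 ≤ hlenB k
  depotAisle : Fin n
  depotTop : Bool

namespace Warehouse

variable (W : Warehouse)

/-- Vertices of the warehouse graph: in aisle `j`, position `0` is the back cross-aisle
vertex `a_j`, position `picks j + 1` is the front cross-aisle vertex `b_j`, and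
positions `1, …, picks j` are the pick vertices of aisle `j`. -/
def V : Type := Σ j : Fin W.n, Fin (W.picks j + 2)

instance : DecidableEq W.V :=
  inferInstanceAs (DecidableEq (Σ j : Fin W.n, Fin (W.picks j + 2)))

instance : Fintype W.V :=
  inferInstanceAs (Fintype (Σ j : Fin W.n, Fin (W.picks j + 2)))

/-- The back cross-aisle vertex `a_j`. -/
def aV (j : Fin W.n) : W.V := ⟨j, 0⟩

/-- The front cross-aisle vertex `b_j`. -/
def bV (j : Fin W.n) : W.V := ⟨j, Fin.last (W.picks j + 1)⟩

/-- The depot vertex `v₀`. -/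
def depot : W.V := if W.depotTop then W.aV W.depotAisle else W.bV W.depotAisle

/-- `v` is a pick vertex, i.e. a vertex strictly inside an aisle. -/
def IsPick (v : W.V) : Prop := 0 < v.2.val ∧ v.2.val < W.picks v.1 + 1

/-- `v` is a required vertex, i.e. a member of `P` (a pick vertex or the depot). -/
def Required (v : W.V) : Prop := W.IsPick v ∨ v = W.depot

/-- Edges of the warehouse graph: a vertical edge `⟨j, i⟩` joins positions `i` and
`i+1` of aisle `j`; horizontal edges `inr (inl k)` join `a_k a_{k+1}` and
`inr (inr k)` join `b_k b_{k+1}`. -/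
def E : Type := (Σ j : Fin W.n, Fin (W.picks j + 1)) ⊕ (Fin (W.n - 1) ⊕ Fin (W.n - 1))

instance : DecidableEq W.E :=
  inferInstanceAs (DecidableEq ((Σ j : Fin W.n, Fin (W.picks j + 1)) ⊕ (Fin (W.n - 1) ⊕ Fin (W.n - 1))))

instance : Fintype W.E :=
  inferInstanceAs (Fintype ((Σ j : Fin W.n, Fin (W.picks j + 1)) ⊕ (Fin (W.n - 1) ⊕ Fin (W.n - 1))))

/-- The left aisle of a horizontal edge index. -/
def leftAisle (k : Fin (W.n - 1)) : Fin W.n := ⟨k.val, by have := k.isLt; omega⟩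

/-- The right aisle of a horizontal edge index. -/
def rightAisle (k : Fin (W.n - 1)) : Fin W.n := ⟨k.val + 1, by have := k.isLt; omega⟩

/-- Endpoints of an edge. -/
def ends : W.E → W.V × W.V
  | .inl ⟨j, i⟩ => (⟨j, i.castSucc⟩, ⟨j, i.succ⟩)
  | .inr (.inl k) => (W.aV (W.leftAisle k), W.aV (W.rightAisle k))
  | .inr (.inr k) => (W.bV (W.leftAisle k), W.bV (W.rightAisle k))

/-- Length of an edge. -/
def elen : W.E → ℝ
  | .inl ⟨j, i⟩ => W.vlen j i
  | .inr (.inl k) => W.hlenA k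
  | .inr (.inr k) => W.hlenB k

/-- A subgraph of `G` is a multiplicity function taking each edge with multiplicity at most 2. -/
def IsSub (T : W.E → ℕ) : Prop := ∀ e, T e ≤ 2

/-- Degree of a vertex in a subgraph, counting edges with multiplicity. -/
def deg (T : W.E → ℕ) (v : W.V) : ℕ :=
  ∑ e : W.E, T e * ((if (W.ends e).1 = v then 1 else 0) + (if (W.ends e).2 = v then 1 else 0))

/-- Total length of a subgraph, counting edges with multiplicity. -/
def length (T : W.E → ℕ) : ℝ := ∑ e : W.E, (T e : ℝ) * W.elen e

/-- Source of a directed traversal step. -/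
def stepSrc (s : W.E × Bool) : W.V := if s.2 then (W.ends s.1).1 else (W.ends s.1).2

/-- Destination of a directed traversal step. -/
def stepDst (s : W.E × Bool) : W.V := if s.2 then (W.ends s.1).2 else (W.ends s.1).1

/-- A list of directed steps is a closed walk. -/
def IsClosedWalk (l : List (W.E × Bool)) : Prop :=
  l.Chain' (fun s t => W.stepDst s = W.stepSrc t) ∧
  ∀ s ∈ l.head?, ∀ t ∈ l.getLast?, W.stepDst t = W.stepSrc s

/-- `T` is a tour subgraph: every required vertex has positive degree and there is a
closed walk traversing every edge of `T`, counted with multiplicity, exactly once. -/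
def IsTour (T : W.E → ℕ) : Prop :=
  W.IsSub T ∧ (∀ v, W.Required v → 0 < W.deg T v) ∧
  ∃ l : List (W.E × Bool), W.IsClosedWalk l ∧ ∀ e : W.E, (l.map Prod.fst).count e = T e

/-- `T` is an `L` partial tour subgraph: `T` is a subgraph supported on `L` and there is a
subgraph `C` of `G − L` such that `T ∪ C` is a tour subgraph of `G`. -/
def IsPTS (L : Set W.E) (T : W.E → ℕ) : Prop :=
  W.IsSub T ∧ (∀ e ∉ L, T e = 0) ∧
  ∃ C : W.E → ℕ, W.IsSub C ∧ (∀ e ∈ L, C e = 0) ∧ W.IsTour (fun e => T e + C e)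

/-- Two `L` PTSs are equivalent: any completion of one is a completion of the other. -/
def EquivPTS (L : Set W.E) (T₁ T₂ : W.E → ℕ) : Prop :=
  ∀ C : W.E → ℕ, W.IsSub C → (∀ e ∈ L, C e = 0) →
    (W.IsTour (fun e => T₁ e + C e) ↔ W.IsTour (fun e => T₂ e + C e))

/-- The edge set containing the vertical edges of the (0-indexed) aisles `< vmax` and the
horizontal edges with (0-indexed) index `< hmax`.  Thus, in paper (1-indexed) notation,
`L_j = edgesUpTo j (j-1)`, `L_j^- = edgesUpTo (j-1) (j-1)` and `G = edgesUpTo n (n-1)`. -/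
def edgesUpTo (vmax hmax : ℕ) : Set W.E := fun e =>
  match e with
  | .inl ⟨i, _⟩ => i.val < vmax
  | .inr (.inl k) => k.val < hmax
  | .inr (.inr k) => k.val < hmax

/-- The simple graph on the vertices of `G` induced by the edges of positive multiplicity. -/
def sgraph (T : W.E → ℕ) : SimpleGraph W.V where
  Adj v w := v ≠ w ∧ ∃ e, 0 < T e ∧
    (((W.ends e).1 = v ∧ (W.ends e).2 = w) ∨ ((W.ends e).1 = w ∧ (W.ends e).2 = v))
  symm := by
    constructor
    intro v w hvw
    obtain ⟨hne, e, he, hor⟩ := hvw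
    exact ⟨hne.symm, e, he, hor.symm⟩
  loopless := by constructor; intro v h; exact h.1 rfl

/-- Number of connected components of a subgraph after deleting all vertices of degree zero. -/
noncomputable def numComp (T : W.E → ℕ) : ℕ :=
  Nat.card ((W.sgraph T).induce {v : W.V | 0 < W.deg T v}).ConnectedComponent

/-- `v` and `w` both have positive degree but lie in different connected components of `T`. -/
def SepComp (T : W.E → ℕ) (v w : W.V) : Prop :=
  0 < W.deg T v ∧ 0 < W.deg T w ∧ ¬ (W.sgraph T).Reachable v w

/-- The equivalence class of a subgraph relative to the cross-aisle vertices of aisle `j`: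
the degree parities of `a_j` and `b_j` and the number of nonempty connected components. -/
noncomputable def classOf (T : W.E → ℕ) (j : Fin W.n) : DegClass × DegClass × ℕ :=
  (degClass (W.deg T (W.aV j)), degClass (W.deg T (W.bV j)), W.numComp T)

theorem exists_gapIdx (j : Fin W.n) :
    ∃ g : Fin (W.picks j + 1), ∀ i, W.vlen j i ≤ W.vlen j g := by
  obtain ⟨g, -, hg⟩ :=
    Finset.exists_max_image (Finset.univ : Finset (Fin (W.picks j + 1))) (W.vlen j)
      ⟨0, Finset.mem_univ 0⟩
  exact ⟨g, fun i => hg i (Finset.mem_univ i)⟩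

/-- The vertical edge of aisle `j` of maximum length: the edge omitted by the `gap`
configuration (which leaves the largest section of the aisle unconnected). -/
noncomputable def gapIdx (j : Fin W.n) : Fin (W.picks j + 1) := (W.exists_gapIdx j).choose

theorem gapIdx_spec (j : Fin W.n) : ∀ i, W.vlen j i ≤ W.vlen j (W.gapIdx j) :=
  (W.exists_gapIdx j).choose_spec

/-- The multiplicity of the `i`-th vertical edge of aisle `j` in each of the six vertical
edge configurations. -/
noncomputable def vconfFun (j : Fin W.n) (c : VCName) (i : Fin (W.picks j + 1)) : ℕ :=
  match c with
  | .onepass => 1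
  | .top => if i.val < W.picks j then 2 else 0
  | .bottom => if 1 ≤ i.val then 2 else 0
  | .gap => if i = W.gapIdx j then 0 else 2
  | .twopass => 2
  | .none => 0

/-- A vertical edge configuration in aisle `j`, as a subgraph of `G`. -/
noncomputable def vcSub (j : Fin W.n) (c : VCName) : W.E → ℕ := fun e =>
  match e with
  | .inl ⟨i, x⟩ =>
      if h : i = j then W.vconfFun j c ⟨x.val, by exact h ▸ x.isLt⟩ else 0
  | .inr _ => 0

/-- A horizontal edge configuration between aisles `k` and `k+1`, as a subgraph of `G`. -/
def hcSub (k : Fin (W.n - 1)) (c : HCName) : W.E → ℕ := fun e =>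
  match e with
  | .inl _ => 0
  | .inr (.inl k') => if k' = k then hcA c else 0
  | .inr (.inr k') => if k' = k then hcB c else 0

end Warehouse



namespace Warehouse

variable (W : Warehouse)

theorem ends_ne (e : W.E) : (W.ends e).1 ≠ (W.ends e).2 := by
  match e with
  | .inl ⟨j, i⟩ =>
    simp only [ends]
    intro h
    have := congrArg (fun v : W.V => v.2.val) h
    simp [Fin.val_succ] at this
  | .inr (.inl k) =>
    simp only [ends]
    intro h
    have := congrArg (fun v : W.V => v.1.val) h
    simp [aV, leftAisle, rightAisle] at this
  | .inr (.inr k) =>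
    simp only [ends]
    intro h
    have := congrArg (fun v : W.V => v.1.val) h
    simp [bV, leftAisle, rightAisle] at this

theorem deg_add (T C : W.E → ℕ) (v : W.V) :
    W.deg (fun e => T e + C e) v = W.deg T v + W.deg C v := by
  unfold deg
  rw [← Finset.sum_add_distrib]
  congr 1; funext e; ring

theorem deg_pos_iff {T : W.E → ℕ} {v : W.V} :
    0 < W.deg T v ↔ ∃ e, 0 < T e ∧ ((W.ends e).1 = v ∨ (W.ends e).2 = v) := by
  unfold deg
  rw [pos_iff_ne_zero, Ne, Finset.sum_eq_zero_iff]
  constructor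
  · intro h
    push_neg at h
    obtain ⟨e, -, he⟩ := h
    refine ⟨e, ?_, ?_⟩
    · by_contra h0
      simp only [Nat.pos_iff_ne_zero, not_not] at h0
      simp [h0] at he
    · by_contra h0
      push_neg at h0
      simp [h0.1, h0.2] at he
  · rintro ⟨e, he, hv⟩ h
    have := h e (Finset.mem_univ e)
    rcases hv with hv | hv <;> simp [hv] at this <;> omega

theorem deg_mono {T T' : W.E → ℕ} (h : ∀ e, T e ≤ T' e) (v : W.V) :
    W.deg T v ≤ W.deg T' v := by
  unfold deg
  exact Finset.sum_le_sum fun e _ => Nat.mul_le_mul_right _ (h e)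

theorem deg_sub {T c : W.E → ℕ} (h : ∀ e, c e ≤ T e) (v : W.V) :
    W.deg (fun e => T e - c e) v = W.deg T v - W.deg c v := by
  have : W.deg T v = W.deg (fun e => T e - c e) v + W.deg c v := by
    rw [← W.deg_add]
    unfold deg
    congr 1; funext e
    show _ = (T e - c e + c e) * _
    rw [Nat.sub_add_cancel (h e)]
  omega

theorem sgraph_adj_of_edge {T : W.E → ℕ} {e : W.E} (he : 0 < T e) :
    (W.sgraph T).Adj (W.ends e).1 (W.ends e).2 :=
  ⟨W.ends_ne e, e, he, Or.inl ⟨rfl, rfl⟩⟩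

theorem deg_pos_of_adj {T : W.E → ℕ} {v w : W.V} (h : (W.sgraph T).Adj v w) :
    0 < W.deg T v := by
  obtain ⟨-, e, he, h | h⟩ := h
  · exact W.deg_pos_iff.2 ⟨e, he, Or.inl h.1⟩
  · exact W.deg_pos_iff.2 ⟨e, he, Or.inr h.2⟩

theorem sgraph_le {T T' : W.E → ℕ} (h : ∀ e, T e ≤ T' e) :
    W.sgraph T ≤ W.sgraph T' := by
  rintro v w ⟨hne, e, he, hor⟩
  exact ⟨hne, e, lt_of_lt_of_le he (h e), hor⟩

theorem sgraph_add_left (T C : W.E → ℕ) :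
    W.sgraph T ≤ W.sgraph (fun e => T e + C e) :=
  W.sgraph_le fun e => Nat.le_add_right _ _

theorem sgraph_add_right (T C : W.E → ℕ) :
    W.sgraph C ≤ W.sgraph (fun e => T e + C e) :=
  W.sgraph_le fun e => Nat.le_add_left _ _

/-- Edge multiset of a step list. -/
def cnt (l : List (W.E × Bool)) (e : W.E) : ℕ := (l.map Prod.fst).count e

theorem cnt_nil (e : W.E) : W.cnt [] e = 0 := rfl

theorem cnt_append (l₁ l₂ : List (W.E × Bool)) (e : W.E) :
    W.cnt (l₁ ++ l₂) e = W.cnt l₁ e + W.cnt l₂ e := by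
  simp [cnt]

theorem cnt_perm {l₁ l₂ : List (W.E × Bool)} (h : l₁.Perm l₂) (e : W.E) :
    W.cnt l₁ e = W.cnt l₂ e :=
  (h.map Prod.fst).count_eq e

theorem length_eq_sum_cnt (l : List (W.E × Bool)) :
    l.length = ∑ e : W.E, W.cnt l e := by
  induction l with
  | nil => simp [cnt]
  | cons s t ih =>
    simp only [List.length_cons, ih]
    have : ∀ e, W.cnt (s :: t) e = (if s.1 = e then 1 else 0) + W.cnt t e := by
      intro e
      simp [cnt, List.count_cons]
      by_cases h : s.1 = e <;> simp [h] <;> omega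
    simp only [this, Finset.sum_add_distrib, Finset.sum_ite_eq, Finset.mem_univ, if_true]
    omega

/-- Number of steps of `l` entering `v`. -/
def inC (l : List (W.E × Bool)) (v : W.V) : ℕ := l.countP (fun s => W.stepDst s = v)

/-- Number of steps of `l` leaving `v`. -/
def outC (l : List (W.E × Bool)) (v : W.V) : ℕ := l.countP (fun s => W.stepSrc s = v)

theorem deg_cnt (l : List (W.E × Bool)) (v : W.V) :
    W.deg (W.cnt l) v = W.inC l v + W.outC l v := by
  induction l with
  | nil =>
    simp only [inC, outC, List.countP_nil]
    unfold deg
    simp [cnt]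
  | cons s t ih =>
    have hc : ∀ e, W.cnt (s :: t) e = W.cnt [s] e + W.cnt t e := fun e => W.cnt_append [s] t e
    have hdeg : W.deg (W.cnt (s :: t)) v = W.deg (W.cnt [s]) v + W.deg (W.cnt t) v := by
      calc W.deg (W.cnt (s :: t)) v = W.deg (fun e => W.cnt [s] e + W.cnt t e) v := by
            congr 1; funext e; exact hc e
        _ = _ := W.deg_add _ _ v
    have h1 : W.deg (W.cnt [s]) v = W.inC [s] v + W.outC [s] v := by
      unfold deg
      have : ∀ e : W.E, W.cnt [s] e = if s.1 = e then 1 else 0 := by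
        intro e
        by_cases h : s.1 = e
        · simp [cnt, h]
        · simp [cnt, List.count_singleton', if_neg (Ne.symm h), h]
      simp only [this, ite_mul, one_mul, zero_mul, Finset.sum_ite_eq, Finset.mem_univ,
        if_true]
      simp only [inC, outC, List.countP_cons, List.countP_nil]
      simp only [stepSrc, stepDst]
      cases s with
      | mk e b =>
        cases b <;> simp <;> by_cases h1 : (W.ends e).1 = v <;>
          by_cases h2 : (W.ends e).2 = v <;> simp [h1, h2] <;> omega
    have h2 : W.inC (s :: t) v = W.inC [s] v + W.inC t v := by
      simp [inC, List.countP_cons]; omega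
    have h3 : W.outC (s :: t) v = W.outC [s] v + W.outC t v := by
      simp [outC, List.countP_cons]; omega
    rw [hdeg, ih, h1, h2, h3]; omega


theorem indicEq (v x : W.V) : (if v = x then (1:ℕ) else 0) = if x = v then 1 else 0 := by
  by_cases h : v = x
  · rw [if_pos h, if_pos h.symm]
  · rw [if_neg h, if_neg (fun hh => h hh.symm)]

theorem balance (l : List (W.E × Bool)) (hl : l ≠ [])
    (hc : l.Chain' (fun s t => W.stepDst s = W.stepSrc t)) (v : W.V) :
    W.inC l v + (if v = W.stepSrc (l.head hl) then 1 else 0) =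
      W.outC l v + (if v = W.stepDst (l.getLast hl) then 1 else 0) := by
  induction l with
  | nil => exact absurd rfl hl
  | cons s t ih =>
    cases t with
    | nil =>
      have hi : W.inC [s] v = if W.stepDst s = v then 1 else 0 := by
        simp only [inC, List.countP_cons, List.countP_nil, decide_eq_true_eq, Nat.zero_add]
      have ho : W.outC [s] v = if W.stepSrc s = v then 1 else 0 := by
        simp only [outC, List.countP_cons, List.countP_nil, decide_eq_true_eq, Nat.zero_add]
      have hgl : ([s] : List (W.E × Bool)).getLast hl = s := rfl
      rw [hi, ho, hgl, List.head_cons, W.indicEq v (W.stepSrc s), W.indicEq v (W.stepDst s)]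
      omega
    | cons s' t' =>
      have hne' : (s' :: t') ≠ [] := by simp
      have hc' := hc.tail
      have hR : W.stepDst s = W.stepSrc s' := hc.rel_head
      have ih' := ih hne' hc'
      have hin : W.inC (s :: s' :: t') v
          = W.inC (s' :: t') v + (if W.stepDst s = v then 1 else 0) := by
        simp only [inC, List.countP_cons, decide_eq_true_eq]
      have hout : W.outC (s :: s' :: t') v
          = W.outC (s' :: t') v + (if W.stepSrc s = v then 1 else 0) := by
        simp only [outC, List.countP_cons, decide_eq_true_eq]
      show W.inC (s :: s' :: t') v + (if v = W.stepSrc s then 1 else 0) =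
        W.outC (s :: s' :: t') v + (if v = W.stepDst ((s' :: t').getLast hne') then 1 else 0)
      rw [hin, hout]
      rw [List.head_cons] at ih'
      have hEq : (if v = W.stepSrc s' then (1:ℕ) else 0) = (if v = W.stepDst s then 1 else 0) := by
        rw [hR]
      rw [hEq] at ih'
      simp only [W.indicEq] at ih' ⊢
      set A := if W.stepDst s = v then (1:ℕ) else 0 with hA
      set B := if W.stepSrc s = v then (1:ℕ) else 0 with hB
      set D := if W.stepDst ((s' :: t').getLast hne') = v then (1:ℕ) else 0 with hD
      omega

theorem closed_in_eq_out {l : List (W.E × Bool)} (h : W.IsClosedWalk l) (v : W.V) :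
    W.inC l v = W.outC l v := by
  rcases eq_or_ne l [] with rfl | hl
  · rfl
  · have hb := W.balance l hl h.1 v
    have hho : l.head? = some (l.head hl) := List.head?_eq_head hl
    have hlo : l.getLast? = some (l.getLast hl) := List.getLast?_eq_getLast hl
    have := h.2 (l.head hl) (by rw [hho]; rfl) (l.getLast hl) (by rw [hlo]; rfl)
    rw [this] at hb
    omega

theorem closed_even_deg {l : List (W.E × Bool)} (h : W.IsClosedWalk l) (v : W.V) :
    Even (W.deg (W.cnt l) v) := by
  rw [W.deg_cnt, W.closed_in_eq_out h]
  exact ⟨W.outC l v, rfl⟩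

theorem chain_reach {T : W.E → ℕ} (l : List (W.E × Bool))
    (hc : l.Chain' (fun s t => W.stepDst s = W.stepSrc t))
    (hT : ∀ s ∈ l, 0 < T s.1) (hl : l ≠ []) :
    ∀ s ∈ l, (W.sgraph T).Reachable (W.stepSrc (l.head hl)) (W.stepSrc s) := by
  induction l with
  | nil => exact absurd rfl hl
  | cons s t ih =>
    intro u hu
    rcases List.mem_cons.1 hu with rfl | hu
    · rfl
    · have ht : t ≠ [] := List.ne_nil_of_mem hu
      have h1 : (W.sgraph T).Reachable (W.stepSrc s) (W.stepSrc (t.head ht)) := by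
        have hR : W.stepDst s = W.stepSrc (t.head ht) := by
          exact (List.isChain_cons.mp hc).1 _ (by rw [List.head?_eq_head ht]; rfl)
        have hadj : (W.sgraph T).Adj (W.ends s.1).1 (W.ends s.1).2 :=
          W.sgraph_adj_of_edge (hT s (by simp))
        rw [← hR]
        cases hb : s.2 <;> simp only [stepSrc, stepDst, hb, if_true, if_false] <;>
          [exact hadj.symm.reachable; exact hadj.reachable]
      exact h1.trans (ih hc.tail (fun x hx => hT x (List.mem_cons_of_mem s hx)) ht u hu)

theorem step_src_or_dst {s : W.E × Bool} {v : W.V} :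
    ((W.ends s.1).1 = v ∨ (W.ends s.1).2 = v) ↔ (W.stepSrc s = v ∨ W.stepDst s = v) := by
  cases hb : s.2 <;> simp [stepSrc, stepDst, hb, or_comm]

theorem mem_of_cnt_pos {l : List (W.E × Bool)} {e : W.E} (h : 0 < W.cnt l e) :
    ∃ s ∈ l, s.1 = e := by
  have : e ∈ l.map Prod.fst := List.count_pos_iff.1 h
  obtain ⟨s, hs, rfl⟩ := List.mem_map.1 this
  exact ⟨s, hs, rfl⟩

theorem cnt_pos_of_mem {l : List (W.E × Bool)} {s : W.E × Bool} (h : s ∈ l) :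
    0 < W.cnt l s.1 :=
  List.count_pos_iff.2 (List.mem_map.2 ⟨s, h, rfl⟩)

/-- Any vertex of positive degree in the edge multiset of a walk is the source or
destination of a step. -/
theorem exists_step_of_deg_pos {l : List (W.E × Bool)} {v : W.V}
    (h : 0 < W.deg (W.cnt l) v) : ∃ s ∈ l, W.stepSrc s = v ∨ W.stepDst s = v := by
  obtain ⟨e, he, hv⟩ := W.deg_pos_iff.1 h
  obtain ⟨s, hs, rfl⟩ := W.mem_of_cnt_pos he
  exact ⟨s, hs, W.step_src_or_dst.1 hv⟩

theorem closed_rotate_one {l : List (W.E × Bool)} (h : W.IsClosedWalk l) :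
    W.IsClosedWalk (l.rotate 1) := by
  cases l with
  | nil => exact h
  | cons s t =>
    cases t with
    | nil => simpa using h
    | cons s' t' =>
      rw [List.rotate_cons_succ, List.rotate_zero]
      obtain ⟨hc, hcl⟩ := h
      have hR : W.stepDst s = W.stepSrc s' := hc.rel_head
      have hlast : (s :: s' :: t').getLast (by simp) = (s' :: t').getLast (by simp) := by
        simp [List.getLast_cons]
      have hclose : W.stepDst ((s' :: t').getLast (by simp)) = W.stepSrc s := by
        have := hcl s (by rw [List.head?_eq_head (by simp : (s :: s' :: t') ≠ [])]; rfl)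
          ((s :: s' :: t').getLast (by simp))
          (by rw [List.getLast?_eq_getLast (by simp : (s :: s' :: t') ≠ [])]; rfl)
        rw [hlast] at this
        exact this
      constructor
      · refine List.IsChain.append hc.tail (List.isChain_singleton s) ?_
        intro x hx y hy
        simp only [List.head?_cons, Option.mem_def, Option.some.injEq] at hy
        subst hy
        rw [List.getLast?_eq_getLast (by simp : (s' :: t') ≠ [])] at hx
        simp only [Option.mem_def, Option.some.injEq] at hx
        subst hx
        exact hclose
      · intro x hx y hy
        have hhd : ((s' :: t') ++ [s]).head? = some s' := rfl
        rw [hhd] at hx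
        simp only [Option.mem_def, Option.some.injEq] at hx
        subst hx
        rw [List.getLast?_eq_getLast (by simp : ((s' :: t') ++ [s]) ≠ [])] at hy
        simp only [Option.mem_def, Option.some.injEq] at hy
        subst hy
        rw [List.getLast_append]
        exact hR.symm ▸ hR ▸ rfl

theorem closed_rotate {l : List (W.E × Bool)} (h : W.IsClosedWalk l) (k : ℕ) :
    W.IsClosedWalk (l.rotate k) := by
  induction k with
  | zero => simpa using h
  | succ n ih =>
    have : l.rotate (n + 1) = (l.rotate n).rotate 1 := by
      rw [List.rotate_rotate]
    rw [this]
    exact W.closed_rotate_one ih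

theorem cnt_rotate (l : List (W.E × Bool)) (k : ℕ) (e : W.E) :
    W.cnt (l.rotate k) e = W.cnt l e :=
  W.cnt_perm (l.rotate_perm k) e

theorem exists_rotate_head {l : List (W.E × Bool)} {s : W.E × Bool} (hs : s ∈ l) :
    ∃ k, ∃ h : l.rotate k ≠ [], (l.rotate k).head h = s := by
  obtain ⟨l₁, l₂, rfl⟩ := List.append_of_mem hs
  have hrot : (l₁ ++ s :: l₂).rotate l₁.length = s :: (l₂ ++ l₁) := by
    rw [List.rotate_eq_drop_append_take (by simp)]
    simp
  have hne : (l₁ ++ s :: l₂).rotate l₁.length ≠ [] := by rw [hrot]; simp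
  refine ⟨l₁.length, hne, ?_⟩
  revert hne
  rw [hrot]
  intro hne
  rfl

theorem closed_dst_src {l : List (W.E × Bool)} (h : W.IsClosedWalk l) {s : W.E × Bool}
    (hs : s ∈ l) : ∃ t ∈ l, W.stepSrc t = W.stepDst s := by
  obtain ⟨l₁, l₂, rfl⟩ := List.append_of_mem hs
  cases l₂ with
  | cons s' l₂' =>
    have hch := (List.isChain_append.mp h.1).2.1
    exact ⟨s', by simp, (hch.rel_head).symm⟩
  | nil =>
    have hne : (l₁ ++ [s]) ≠ [] := by simp
    have hlast : (l₁ ++ [s]).getLast hne = s := List.getLast_append _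
    have hclose : W.stepDst ((l₁ ++ [s]).getLast hne) = W.stepSrc ((l₁ ++ [s]).head hne) :=
      h.2 _ (by rw [List.head?_eq_head hne]; rfl) _ (by rw [List.getLast?_eq_getLast hne]; rfl)
    rw [hlast] at hclose
    exact ⟨(l₁ ++ [s]).head hne, List.head_mem hne, hclose.symm⟩

/-- In a nonempty closed walk, every vertex of positive degree is the source of the
head of some rotation. -/
theorem exists_rotate_src {l : List (W.E × Bool)} (hcl : W.IsClosedWalk l) {v : W.V}
    (h : 0 < W.deg (W.cnt l) v) :
    ∃ k, ∃ hne : l.rotate k ≠ [], W.stepSrc ((l.rotate k).head hne) = v := by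
  obtain ⟨s, hs, hsv⟩ := W.exists_step_of_deg_pos h
  rcases hsv with hsv | hsv
  · obtain ⟨k, hne, hk⟩ := W.exists_rotate_head hs
    exact ⟨k, hne, by rw [hk, hsv]⟩
  · obtain ⟨t, ht, htv⟩ := W.closed_dst_src hcl hs
    obtain ⟨k, hne, hk⟩ := W.exists_rotate_head ht
    exact ⟨k, hne, by rw [hk, htv, hsv]⟩

theorem closed_append {l₁ l₂ : List (W.E × Bool)} (h₁ : W.IsClosedWalk l₁)
    (h₂ : W.IsClosedWalk l₂) (hn₁ : l₁ ≠ []) (hn₂ : l₂ ≠ [])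
    (hsame : W.stepSrc (l₁.head hn₁) = W.stepSrc (l₂.head hn₂)) :
    W.IsClosedWalk (l₁ ++ l₂) := by
  have hclose₁ : W.stepDst (l₁.getLast hn₁) = W.stepSrc (l₁.head hn₁) :=
    h₁.2 _ (by rw [List.head?_eq_head hn₁]; rfl) _ (by rw [List.getLast?_eq_getLast hn₁]; rfl)
  have hclose₂ : W.stepDst (l₂.getLast hn₂) = W.stepSrc (l₂.head hn₂) :=
    h₂.2 _ (by rw [List.head?_eq_head hn₂]; rfl) _ (by rw [List.getLast?_eq_getLast hn₂]; rfl)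
  constructor
  · refine List.IsChain.append h₁.1 h₂.1 ?_
    intro x hx y hy
    rw [List.getLast?_eq_getLast hn₁] at hx
    rw [List.head?_eq_head hn₂] at hy
    simp only [Option.mem_def, Option.some.injEq] at hx hy
    subst hx; subst hy
    rw [hclose₁, hsame]
  · intro x hx y hy
    have hxx : (l₁ ++ l₂).head? = l₁.head? := List.head?_append_of_ne_nil _ hn₁
    rw [hxx, List.head?_eq_head hn₁] at hx
    rw [List.getLast?_append_of_ne_nil _ hn₂, List.getLast?_eq_getLast hn₂] at hy
    simp only [Option.mem_def, Option.some.injEq] at hx hy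
    subst hx; subst hy
    rw [hclose₂, ← hsame]


theorem step_reach {T : W.E → ℕ} {s : W.E × Bool} (h : 0 < T s.1) :
    (W.sgraph T).Reachable (W.stepSrc s) (W.stepDst s) := by
  have hadj : (W.sgraph T).Adj (W.ends s.1).1 (W.ends s.1).2 := W.sgraph_adj_of_edge h
  cases hb : s.2 <;> simp only [stepSrc, stepDst, hb, if_true, if_false]
  · exact hadj.symm.reachable
  · exact hadj.reachable

open scoped Classical in
/-- Cycle extraction: in a multigraph with all degrees even, any edge lies on a
closed trail. -/
theorem exists_cycle {T : W.E → ℕ} (hEven : ∀ v, Even (W.deg T v)) {e₀ : W.E}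
    (he₀ : 0 < T e₀) :
    ∃ l, W.IsClosedWalk l ∧ l ≠ [] ∧ (∀ e, W.cnt l e ≤ T e) ∧ 0 < W.cnt l e₀ := by
  set R := fun s t => W.stepDst s = W.stepSrc t with hR
  set s₀ : W.E × Bool := (e₀, true) with hs₀
  set B := ∑ e, T e with hB
  set P := fun n => ∃ l : List (W.E × Bool), l.Chain' R ∧ (∀ e, W.cnt l e ≤ T e) ∧
    l.head? = some s₀ ∧ l.length = n with hP
  have hP1 : P 1 := by
    refine ⟨[s₀], List.isChain_singleton _, ?_, rfl, rfl⟩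
    intro e
    by_cases h : e₀ = e
    · subst h
      have h1 : ([(e₀, true)].map Prod.fst).count e₀ = 1 := by simp
      show ([(e₀, true)].map Prod.fst).count e₀ ≤ T e₀
      omega
    · have : W.cnt [s₀] e = 0 := by
        show ([(e₀, true)].map Prod.fst).count e = 0
        simp only [List.map_cons, List.map_nil, List.count_singleton']
        exact if_neg h
      simp [this]
  have hPB : ∀ n, P n → n ≤ B := by
    rintro n ⟨l, -, hle, -, rfl⟩
    rw [W.length_eq_sum_cnt l, hB]
    exact Finset.sum_le_sum fun e _ => hle e
  have h1B : 1 ≤ B := hPB 1 hP1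
  set n₀ := Nat.findGreatest P B with hn₀
  have hPn₀ : P n₀ := Nat.findGreatest_spec h1B hP1
  obtain ⟨l, hchain, hle, hhead, hlen⟩ := hPn₀
  have hne : l ≠ [] := by
    intro h; rw [h] at hhead; simp at hhead
  have hheadl : l.head hne = s₀ := by
    have := List.head?_eq_head hne
    rw [this] at hhead
    exact Option.some.inj hhead
  -- closure
  have hclose : W.stepDst (l.getLast hne) = W.stepSrc (l.head hne) := by
    by_contra hnc
    have hbal := W.balance l hne hchain (W.stepDst (l.getLast hne))
    rw [if_pos rfl, if_neg hnc] at hbal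
    set b := W.stepDst (l.getLast hne) with hb
    have hodd : ¬ Even (W.deg (W.cnt l) b) := by
      rw [W.deg_cnt, Nat.even_iff]
      omega
    -- find an unused edge at b
    have hex : ∃ e, W.cnt l e < T e ∧ ((W.ends e).1 = b ∨ (W.ends e).2 = b) := by
      by_contra hnex
      push_neg at hnex
      have : W.deg (W.cnt l) b = W.deg T b := by
        unfold deg
        refine Finset.sum_congr rfl fun e _ => ?_
        by_cases h1 : (W.ends e).1 = b <;> by_cases h2 : (W.ends e).2 = b
        · have hceq : W.cnt l e = T e := by
            have := hle e; by_contra hne2; exact (hnex e (by omega)).1 h1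
          rw [hceq]
        · have hceq : W.cnt l e = T e := by
            have := hle e; by_contra hne2; exact (hnex e (by omega)).1 h1
          rw [hceq]
        · have hceq : W.cnt l e = T e := by
            have := hle e; by_contra hne2; exact (hnex e (by omega)).2 h2
          rw [hceq]
        · simp [h1, h2]
      exact hodd (this ▸ hEven b)
    obtain ⟨e, hcnt, hends⟩ := hex
    set s' : W.E × Bool := if (W.ends e).1 = b then (e, true) else (e, false) with hs'
    have hsrc : W.stepSrc s' = b := by
      rcases hends with h | h
      · simp [hs', stepSrc, h]
      · by_cases h1 : (W.ends e).1 = b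
        · simp [hs', stepSrc, h1]
        · simp [hs', stepSrc, h1, h]
    have hfst : s'.1 = e := by
      by_cases h1 : (W.ends e).1 = b <;> simp [hs', h1]
    have hP' : P (n₀ + 1) := by
      refine ⟨l ++ [s'], ?_, ?_, ?_, by simp [hlen]⟩
      · refine List.IsChain.append hchain (List.isChain_singleton _) ?_
        intro x hx y hy
        rw [List.getLast?_eq_getLast hne] at hx
        simp only [Option.mem_def, Option.some.injEq, List.head?_cons] at hx hy
        subst hx; subst hy
        rw [hR]
        simp only []
        rw [hsrc]
      · intro f
        rw [W.cnt_append]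
        by_cases h : e = f
        · subst h
          have : W.cnt [s'] e = 1 := by simp [cnt, hfst]
          omega
        · have : W.cnt [s'] f = 0 := by
            simp [cnt, hfst, List.count_singleton', if_neg (fun hh : e = f => h hh)]
          have := hle f
          omega
      · rw [List.head?_append_of_ne_nil _ hne]
        exact hhead
    have hlt : n₀ < n₀ + 1 := Nat.lt_succ_self _
    exact Nat.findGreatest_is_greatest hlt (hPB _ hP') hP'
  refine ⟨l, ⟨hchain, ?_⟩, hne, hle, ?_⟩
  · intro x hx y hy
    rw [List.head?_eq_head hne] at hx
    rw [List.getLast?_eq_getLast hne] at hy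
    simp only [Option.mem_def, Option.some.injEq] at hx hy
    subst hx; subst hy
    exact hclose
  · have : s₀ ∈ l := hheadl ▸ List.head_mem hne
    have := W.cnt_pos_of_mem this
    simpa [s₀] using this

/-- Decomposition of an even multigraph into closed walks. -/
theorem decompose_even : ∀ N (T : W.E → ℕ), (∑ e, T e) = N → (∀ v, Even (W.deg T v)) →
    ∃ ls : List (List (W.E × Bool)), (∀ l ∈ ls, W.IsClosedWalk l ∧ l ≠ []) ∧
      ∀ e, (ls.map (fun l => W.cnt l e)).sum = T e := by
  intro N
  induction N using Nat.strong_induction_on with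
  | _ N ih =>
    intro T hN hEven
    by_cases hT : ∀ e, T e = 0
    · exact ⟨[], by simp, fun e => by simp [hT e]⟩
    · push_neg at hT
      obtain ⟨e₀, he₀⟩ := hT
      obtain ⟨l, hcl, hlne, hle, hpos⟩ := W.exists_cycle hEven (Nat.pos_of_ne_zero he₀)
      set T' := fun e => T e - W.cnt l e with hT'
      have hsum' : ∑ e, T' e < N := by
        have h1 : ∑ e, T' e + ∑ e, W.cnt l e = ∑ e, T e := by
          rw [← Finset.sum_add_distrib]
          exact Finset.sum_congr rfl fun e _ => Nat.sub_add_cancel (hle e)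
        have h2 : 0 < ∑ e, W.cnt l e := by
          rw [← W.length_eq_sum_cnt]
          exact List.length_pos_iff.2 hlne
        omega
      have hEven' : ∀ v, Even (W.deg T' v) := by
        intro v
        rw [hT', W.deg_sub hle]
        have h1 := hEven v
        have h2 := W.closed_even_deg hcl v
        have h3 := W.deg_mono hle v
        rcases h1 with ⟨m, hm⟩; rcases h2 with ⟨k, hk⟩
        exact ⟨m - k, by omega⟩
      obtain ⟨ls, hls, hsum⟩ := ih _ hsum' T' rfl hEven'
      refine ⟨l :: ls, ?_, ?_⟩
      · intro l' hl'
        rcases List.mem_cons.1 hl' with rfl | hmem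
        · exact ⟨hcl, hlne⟩
        · exact hls l' hmem
      · intro e
        simp only [List.map_cons, List.sum_cons, hsum e, hT']
        have := hle e
        omega

/-- Multiplicity of each walk in a family is at most the total. -/
theorem cnt_le_total {ls : List (List (W.E × Bool))} {T : W.E → ℕ}
    (hsum : ∀ e, (ls.map (fun l => W.cnt l e)).sum = T e) {l : List (W.E × Bool)}
    (hl : l ∈ ls) (e : W.E) : W.cnt l e ≤ T e := by
  rw [← hsum e]
  exact List.single_le_sum (fun x _ => Nat.zero_le x) _ (List.mem_map.2 ⟨l, hl, rfl⟩)

/-- Merging a family of closed walks on a connected even multigraph into one closed walk. -/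
theorem merge_walks : ∀ n (ls : List (List (W.E × Bool))) (T : W.E → ℕ),
    ls.length = n → (∀ l ∈ ls, W.IsClosedWalk l ∧ l ≠ []) →
    (∀ e, (ls.map (fun l => W.cnt l e)).sum = T e) →
    (∀ v w, 0 < W.deg T v → 0 < W.deg T w → (W.sgraph T).Reachable v w) →
    ∃ l, W.IsClosedWalk l ∧ ∀ e, W.cnt l e = T e := by
  intro n
  induction n using Nat.strong_induction_on with
  | _ n ih =>
    intro ls T hlen hcl hsum hconn
    match ls, hlen with
    | [], hlen =>
      refine ⟨[], ⟨List.isChain_nil, by simp⟩, fun e => ?_⟩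
      have := hsum e
      simpa [cnt] using this
    | [l₁], hlen =>
      refine ⟨l₁, (hcl l₁ (by simp)).1, fun e => ?_⟩
      have := hsum e
      simpa using this
    | l₁ :: l₂ :: rest, hlen =>
      -- find a walk in l₂ :: rest sharing a vertex with l₁
      have hl₁ := hcl l₁ (by simp)
      have hl₂ := hcl l₂ (by simp)
      set v₁ := W.stepSrc (l₁.head hl₁.2) with hv₁
      set v₂ := W.stepSrc (l₂.head hl₂.2) with hv₂
      have hposcnt : ∀ (l : List (W.E × Bool)) (h : l ≠ []),
          0 < W.deg (W.cnt l) (W.stepSrc (l.head h)) := by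
        intro l h
        refine W.deg_pos_iff.2 ⟨(l.head h).1, W.cnt_pos_of_mem (List.head_mem h), ?_⟩
        exact W.step_src_or_dst.2 (Or.inl rfl)
      have hposT : ∀ (l : List (W.E × Bool)) (h : l ≠ []), l ∈ l₁ :: l₂ :: rest →
          0 < W.deg T (W.stepSrc (l.head h)) := fun l h hmem =>
        lt_of_lt_of_le (hposcnt l h) (W.deg_mono (W.cnt_le_total hsum hmem) _)
      have hreach : (W.sgraph T).Reachable v₁ v₂ :=
        hconn _ _ (hposT l₁ hl₁.2 (by simp)) (hposT l₂ hl₂.2 (by simp))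
      have sum_pos_mem : ∀ (L : List (List (W.E × Bool))) (f : List (W.E × Bool) → ℕ),
          0 < (L.map f).sum → ∃ x ∈ L, 0 < f x := by
        intro L f h
        by_contra hn
        push_neg at hn
        have hz : (L.map f).sum = 0 := List.sum_eq_zero (by
          intro x hx
          obtain ⟨y, hy, rfl⟩ := List.mem_map.1 hx
          have := hn y hy
          omega)
        omega
      have hshare : ∃ l' ∈ l₂ :: rest, ∃ v, 0 < W.deg (W.cnt l₁) v ∧ 0 < W.deg (W.cnt l') v := by
        rw [SimpleGraph.reachable_iff_reflTransGen] at hreach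
        have key : ∀ x, Relation.ReflTransGen (W.sgraph T).Adj v₁ x →
            0 < W.deg (W.cnt l₁) x ∨
            ∃ l' ∈ l₂ :: rest, ∃ v, 0 < W.deg (W.cnt l₁) v ∧ 0 < W.deg (W.cnt l') v := by
          intro x hx
          induction hx with
          | refl => exact Or.inl (hposcnt l₁ hl₁.2)
          | @tail y z hxy hadj ihx =>
            rcases ihx with hy1 | hdone
            · obtain ⟨hne, e, heT, hor⟩ := hadj
              have hsplit := hsum e
              simp only [List.map_cons, List.sum_cons] at hsplit
              by_cases hc1 : 0 < W.cnt l₁ e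
              · left
                refine W.deg_pos_iff.2 ⟨e, hc1, ?_⟩
                rcases hor with ⟨ha1, ha2⟩ | ⟨ha1, ha2⟩
                · exact Or.inr ha2
                · exact Or.inl ha1
              · right
                have hpos' : 0 < (List.map (fun l => W.cnt l e) (l₂ :: rest)).sum := by
                  simp only [List.map_cons, List.sum_cons]
                  omega
                obtain ⟨l', hl'mem, hl'pos⟩ := sum_pos_mem _ _ hpos'
                refine ⟨l', hl'mem, y, hy1, ?_⟩
                refine W.deg_pos_iff.2 ⟨e, hl'pos, ?_⟩
                rcases hor with ⟨ha1, ha2⟩ | ⟨ha1, ha2⟩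
                · exact Or.inl ha1
                · exact Or.inr ha2
            · exact Or.inr hdone
        rcases key v₂ hreach with h | h
        · exact ⟨l₂, by simp, v₂, h, hposcnt l₂ hl₂.2⟩
        · exact h
      obtain ⟨l', hl'mem, v, hvl₁, hvl'⟩ := hshare
      have hcll' := hcl l' (List.mem_cons_of_mem _ hl'mem)
      obtain ⟨k₁, hne₁, hk₁⟩ := W.exists_rotate_src hl₁.1 hvl₁
      obtain ⟨k₂, hne₂, hk₂⟩ := W.exists_rotate_src hcll'.1 hvl'
      set m := l₁.rotate k₁ ++ l'.rotate k₂ with hm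
      have hmcl : W.IsClosedWalk m :=
        W.closed_append (W.closed_rotate hl₁.1 k₁) (W.closed_rotate hcll'.1 k₂) hne₁ hne₂
          (by rw [hk₁, hk₂])
      have hmne : m ≠ [] := by
        rw [hm]
        intro hemp
        rcases List.append_eq_nil_iff.1 hemp with ⟨h1, -⟩
        exact hne₁ h1
      have hmcnt : ∀ e, W.cnt m e = W.cnt l₁ e + W.cnt l' e := by
        intro e; rw [hm, W.cnt_append, W.cnt_rotate, W.cnt_rotate]
      obtain ⟨pre, post, hsplit'⟩ := List.append_of_mem hl'mem
      have hlen2 : (l₂ :: rest).length = pre.length + 1 + post.length := by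
        rw [hsplit']; simp; omega
      refine ih (1 + (pre.length + post.length))
        (by simp only [List.length_cons] at hlen hlen2; omega)
        (m :: (pre ++ post)) T
        (by simp only [List.length_cons, List.length_append]; omega) ?_ ?_ hconn
      · intro x hx
        rcases List.mem_cons.1 hx with rfl | hx'
        · exact ⟨hmcl, hmne⟩
        · have : x ∈ l₂ :: rest := by
            rw [hsplit']
            rcases List.mem_append.1 hx' with h | h
            · exact List.mem_append.2 (Or.inl h)
            · exact List.mem_append.2 (Or.inr (List.mem_cons_of_mem _ h))
          exact hcl x (List.mem_cons_of_mem _ this)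
      · intro e
        have h0 := hsum e
        rw [hsplit'] at h0
        simp only [List.map_cons, List.sum_cons, List.map_append, List.sum_append,
          List.sum_cons] at h0 ⊢
        rw [hmcnt e]
        omega

theorem deg_zero_fun (v : W.V) : W.deg (fun _ => 0) v = 0 := by
  unfold deg; simp

/-- Euler-type characterization of tour subgraphs. -/
theorem isTour_iff (T : W.E → ℕ) : W.IsTour T ↔
    W.IsSub T ∧ (∀ v, W.Required v → 0 < W.deg T v) ∧ (∀ v, Even (W.deg T v)) ∧
    (∀ v w, 0 < W.deg T v → 0 < W.deg T w → (W.sgraph T).Reachable v w) := by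
  constructor
  · rintro ⟨hsub, hreq, l, hcl, hcnt⟩
    have hTc : T = W.cnt l := by funext e; rw [← hcnt e]; rfl
    refine ⟨hsub, hreq, ?_, ?_⟩
    · intro v; rw [hTc]; exact W.closed_even_deg hcl v
    · intro v w hv hw
      rw [hTc] at hv hw ⊢
      rcases eq_or_ne l [] with rfl | hne
      · exfalso
        have : W.cnt ([] : List (W.E × Bool)) = fun _ => 0 := by funext e; rfl
        rw [this, W.deg_zero_fun] at hv
        exact absurd hv (lt_irrefl 0)
      · obtain ⟨s, hs, hvs⟩ := W.exists_step_of_deg_pos hv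
        obtain ⟨t, ht, hwt⟩ := W.exists_step_of_deg_pos hw
        have hTpos : ∀ u ∈ l, 0 < W.cnt l u.1 := fun u hu => W.cnt_pos_of_mem hu
        have h1 := W.chain_reach l hcl.1 hTpos hne s hs
        have h2 := W.chain_reach l hcl.1 hTpos hne t ht
        have hv' : (W.sgraph (W.cnt l)).Reachable (W.stepSrc (l.head hne)) v := by
          rcases hvs with h | h
          · exact h ▸ h1
          · exact h ▸ (h1.trans (W.step_reach (hTpos s hs)))
        have hw' : (W.sgraph (W.cnt l)).Reachable (W.stepSrc (l.head hne)) w := by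
          rcases hwt with h | h
          · exact h ▸ h2
          · exact h ▸ (h2.trans (W.step_reach (hTpos t ht)))
        exact hv'.symm.trans hw'
  · rintro ⟨hsub, hreq, heven, hconn⟩
    obtain ⟨ls, hls, hsum⟩ := W.decompose_even (∑ e, T e) T rfl heven
    obtain ⟨l, hcl, hcnt⟩ := W.merge_walks ls.length ls T rfl hls hsum hconn
    exact ⟨hsub, hreq, l, hcl, fun e => hcnt e⟩



section NumComp

theorem eq_zero_of_numComp_zero {T : W.E → ℕ} (h : W.numComp T = 0) : ∀ e, T e = 0 := by
  intro e
  by_contra he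
  have hv : 0 < W.deg T (W.ends e).1 :=
    W.deg_pos_iff.2 ⟨e, Nat.pos_of_ne_zero he, Or.inl rfl⟩
  have hne : Nonempty ((W.sgraph T).induce {v : W.V | 0 < W.deg T v}).ConnectedComponent :=
    ⟨((W.sgraph T).induce {v : W.V | 0 < W.deg T v}).connectedComponentMk ⟨_, hv⟩⟩
  have hpos := Nat.card_pos
    (α := ((W.sgraph T).induce {v : W.V | 0 < W.deg T v}).ConnectedComponent)
  rw [numComp] at h
  omega

theorem reach_of_numComp_one {T : W.E → ℕ} (h : W.numComp T = 1) :
    ∀ v w, 0 < W.deg T v → 0 < W.deg T w → (W.sgraph T).Reachable v w := by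
  intro v w hv hw
  have hsub : Subsingleton ((W.sgraph T).induce {v : W.V | 0 < W.deg T v}).ConnectedComponent :=
    (Nat.card_eq_one_iff_unique.mp h).1
  have heq : ((W.sgraph T).induce {v : W.V | 0 < W.deg T v}).connectedComponentMk ⟨v, hv⟩ =
      ((W.sgraph T).induce {v : W.V | 0 < W.deg T v}).connectedComponentMk ⟨w, hw⟩ :=
    Subsingleton.elim _ _
  have hre := (SimpleGraph.ConnectedComponent.eq).1 heq
  exact hre.map (SimpleGraph.Embedding.induce {v : W.V | 0 < W.deg T v}).toHom

theorem reach_ab_of_numComp_two {T : W.E → ℕ} (h : W.numComp T = 2) {a b : W.V}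
    (hsep : W.SepComp T a b) :
    ∀ v, 0 < W.deg T v → (W.sgraph T).Reachable v a ∨ (W.sgraph T).Reachable v b := by
  obtain ⟨ha, hb, hnab⟩ := hsep
  intro v hv
  set G' := (W.sgraph T).induce {v : W.V | 0 < W.deg T v} with hG'
  obtain ⟨x, y, hxy, huniv⟩ := Nat.card_eq_two_iff.mp h
  set ca := G'.connectedComponentMk ⟨a, ha⟩ with hca'
  set cb := G'.connectedComponentMk ⟨b, hb⟩ with hcb'
  have hcane : ca ≠ cb := by
    intro hEq
    exact hnab (((SimpleGraph.ConnectedComponent.eq).1 hEq).map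
      (SimpleGraph.Embedding.induce {v : W.V | 0 < W.deg T v}).toHom)
  have hmem : ∀ z : G'.ConnectedComponent, z = ca ∨ z = cb := by
    intro z
    have hz : z ∈ ({x, y} : Set G'.ConnectedComponent) := by rw [huniv]; trivial
    have hcam : ca ∈ ({x, y} : Set G'.ConnectedComponent) := by rw [huniv]; trivial
    have hcbm : cb ∈ ({x, y} : Set G'.ConnectedComponent) := by rw [huniv]; trivial
    simp only [Set.mem_insert_iff, Set.mem_singleton_iff] at hz hcam hcbm
    rcases hcam with h1 | h1 <;> rcases hcbm with h2 | h2
    · exact absurd (h1.trans h2.symm) hcane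
    · rcases hz with h3 | h3
      · exact Or.inl (h3.trans h1.symm)
      · exact Or.inr (h3.trans h2.symm)
    · rcases hz with h3 | h3
      · exact Or.inr (h3.trans h2.symm)
      · exact Or.inl (h3.trans h1.symm)
    · exact absurd (h1.trans h2.symm) hcane
  rcases hmem (G'.connectedComponentMk ⟨v, hv⟩) with h' | h'
  · exact Or.inl (((SimpleGraph.ConnectedComponent.eq).1 h').map
      (SimpleGraph.Embedding.induce {v : W.V | 0 < W.deg T v}).toHom)
  · exact Or.inr (((SimpleGraph.ConnectedComponent.eq).1 h').map
      (SimpleGraph.Embedding.induce {v : W.V | 0 < W.deg T v}).toHom)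

end NumComp

section Interface

theorem interface {j : Fin W.n} {e f : W.E} (he : e ∈ W.edgesUpTo (j.val + 1) j.val)
    (hf : f ∉ W.edgesUpTo (j.val + 1) j.val) {v : W.V}
    (hve : (W.ends e).1 = v ∨ (W.ends e).2 = v) (hvf : (W.ends f).1 = v ∨ (W.ends f).2 = v) :
    v = W.aV j ∨ v = W.bV j := by
  have hv1 : v.1.val ≤ j.val := by
    match e, he with
    | .inl ⟨i, x⟩, he =>
      have hi : i.val < j.val + 1 := he
      rcases hve with h | h <;> rw [← h] <;> simp [ends] <;> omega
    | .inr (.inl k), he =>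
      have hk : k.val < j.val := he
      rcases hve with h | h <;> rw [← h] <;> simp [ends, aV, leftAisle, rightAisle] <;> omega
    | .inr (.inr k), he =>
      have hk : k.val < j.val := he
      rcases hve with h | h <;> rw [← h] <;> simp [ends, bV, leftAisle, rightAisle] <;> omega
  match f, hf with
  | .inl ⟨i, x⟩, hf =>
    exfalso
    have hi : ¬ (i.val < j.val + 1) := hf
    rcases hvf with h | h <;> rw [← h] at hv1 <;> simp [ends] at hv1 <;> omega
  | .inr (.inl k), hf =>
    have hk : ¬ (k.val < j.val) := hf
    rcases hvf with h | h
    · left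
      have hkeq : k.val = j.val := by
        rw [← h] at hv1
        simp [ends, aV, leftAisle] at hv1
        omega
      have hkj : W.leftAisle k = j := Fin.ext hkeq
      rw [← h]
      show W.aV (W.leftAisle k) = W.aV j
      rw [hkj]
    · exfalso
      rw [← h] at hv1
      simp [ends, aV, rightAisle] at hv1
      omega
  | .inr (.inr k), hf =>
    have hk : ¬ (k.val < j.val) := hf
    rcases hvf with h | h
    · right
      have hkeq : k.val = j.val := by
        rw [← h] at hv1
        simp [ends, bV, leftAisle] at hv1
        omega
      have hkj : W.leftAisle k = j := Fin.ext hkeq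
      rw [← h]
      show W.bV (W.leftAisle k) = W.bV j
      rw [hkj]
    · exfalso
      rw [← h] at hv1
      simp [ends, bV, rightAisle] at hv1
      omega

theorem interface_deg {j : Fin W.n} {T C : W.E → ℕ}
    (hsT : ∀ e ∉ W.edgesUpTo (j.val + 1) j.val, T e = 0)
    (hsC : ∀ e ∈ W.edgesUpTo (j.val + 1) j.val, C e = 0) {v : W.V}
    (hT : 0 < W.deg T v) (hC : 0 < W.deg C v) : v = W.aV j ∨ v = W.bV j := by
  obtain ⟨e, he, hve⟩ := W.deg_pos_iff.1 hT
  obtain ⟨f, hfp, hvf⟩ := W.deg_pos_iff.1 hC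
  have heL : e ∈ W.edgesUpTo (j.val + 1) j.val := by
    by_contra h
    rw [hsT e h] at he
    exact absurd he (lt_irrefl 0)
  have hfL : f ∉ W.edgesUpTo (j.val + 1) j.val := by
    intro h
    rw [hsC f h] at hfp
    exact absurd hfp (lt_irrefl 0)
  exact W.interface heL hfL hve hvf

end Interface

end Warehouse

section DegClassLemmas

theorem degClass_zero_iff (d : ℕ) : degClass d = DegClass.zero ↔ d = 0 := by
  unfold degClass
  split_ifs with h1 h2 <;> simp_all

theorem degClass_parity {d₁ d₂ : ℕ} (h : degClass d₁ = degClass d₂) : d₁ % 2 = d₂ % 2 := by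
  unfold degClass at h
  split_ifs at h <;> first | omega | simp_all

theorem degClass_pos {d₁ d₂ : ℕ} (h : degClass d₁ = degClass d₂) : 0 < d₁ ↔ 0 < d₂ := by
  constructor <;> intro hp
  · rcases Nat.eq_zero_or_pos d₂ with h0 | h0
    · have h3 : degClass d₁ = DegClass.zero := by rw [h, (degClass_zero_iff d₂).2 h0]
      have := (degClass_zero_iff d₁).1 h3
      omega
    · exact h0
  · rcases Nat.eq_zero_or_pos d₁ with h0 | h0
    · have h3 : degClass d₂ = DegClass.zero := by rw [← h, (degClass_zero_iff d₁).2 h0]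
      have := (degClass_zero_iff d₂).1 h3
      omega
    · exact h0

end DegClassLemmas

namespace Warehouse

variable (W : Warehouse)

/-- The interface relation: both endpoints in `{a, b}` and joined inside `T` or inside `C`. -/
def SRel (T C : W.E → ℕ) (a b : W.V) : W.V → W.V → Prop := fun p q =>
  (p = a ∨ p = b) ∧ (q = a ∨ q = b) ∧
    ((W.sgraph T).Reachable p q ∨ (W.sgraph C).Reachable p q)

theorem decomp {T C : W.E → ℕ} {a b : W.V}
    (hI : ∀ v, 0 < W.deg T v → 0 < W.deg C v → v = a ∨ v = b)
    {y : W.V} (hy : y = a ∨ y = b) :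
    ∀ x, (W.sgraph (fun e => T e + C e)).Reachable x y →
      (((x = a ∨ x = b) → Relation.ReflTransGen (W.SRel T C a b) x y) ∧
       (0 < W.deg T x → ∃ p, (p = a ∨ p = b) ∧ (W.sgraph T).Reachable x p ∧
          Relation.ReflTransGen (W.SRel T C a b) p y) ∧
       (0 < W.deg C x → ∃ p, (p = a ∨ p = b) ∧ (W.sgraph C).Reachable x p ∧
          Relation.ReflTransGen (W.SRel T C a b) p y)) := by
  intro x hx
  rw [SimpleGraph.reachable_iff_reflTransGen] at hx
  induction hx using Relation.ReflTransGen.head_induction_on with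
  | refl =>
    refine ⟨fun _ => Relation.ReflTransGen.refl, ?_, ?_⟩
    · intro _; exact ⟨y, hy, SimpleGraph.Reachable.refl _, Relation.ReflTransGen.refl⟩
    · intro _; exact ⟨y, hy, SimpleGraph.Reachable.refl _, Relation.ReflTransGen.refl⟩
  | @head x z hxz hzy IH =>
    obtain ⟨hne, e, hpos, hor⟩ := hxz
    have hpos' : 0 < T e + C e := hpos
    have hcase : 0 < T e ∨ 0 < C e := by omega
    rcases hcase with hTe | hCe
    · have hadj : (W.sgraph T).Adj x z := ⟨hne, e, hTe, hor⟩
      have hBT : 0 < W.deg T x → ∃ p, (p = a ∨ p = b) ∧ (W.sgraph T).Reachable x p ∧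
          Relation.ReflTransGen (W.SRel T C a b) p y := by
        intro _
        obtain ⟨p, hp, hzp, hrtg⟩ := IH.2.1 (W.deg_pos_of_adj hadj.symm)
        exact ⟨p, hp, hadj.reachable.trans hzp, hrtg⟩
      have hA : (x = a ∨ x = b) → Relation.ReflTransGen (W.SRel T C a b) x y := by
        intro hxI
        obtain ⟨p, hp, hxp, hrtg⟩ := hBT (W.deg_pos_of_adj hadj)
        exact Relation.ReflTransGen.head ⟨hxI, hp, Or.inl hxp⟩ hrtg
      refine ⟨hA, hBT, ?_⟩
      intro hCx
      have hxI := hI x (W.deg_pos_of_adj hadj) hCx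
      exact ⟨x, hxI, SimpleGraph.Reachable.refl _, hA hxI⟩
    · have hadj : (W.sgraph C).Adj x z := ⟨hne, e, hCe, hor⟩
      have hBC : 0 < W.deg C x → ∃ p, (p = a ∨ p = b) ∧ (W.sgraph C).Reachable x p ∧
          Relation.ReflTransGen (W.SRel T C a b) p y := by
        intro _
        obtain ⟨p, hp, hzp, hrtg⟩ := IH.2.2 (W.deg_pos_of_adj hadj.symm)
        exact ⟨p, hp, hadj.reachable.trans hzp, hrtg⟩
      have hA : (x = a ∨ x = b) → Relation.ReflTransGen (W.SRel T C a b) x y := by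
        intro hxI
        obtain ⟨p, hp, hxp, hrtg⟩ := hBC (W.deg_pos_of_adj hadj)
        exact Relation.ReflTransGen.head ⟨hxI, hp, Or.inr hxp⟩ hrtg
      refine ⟨hA, ?_, hBC⟩
      intro hTx
      have hxI := hI x hTx (W.deg_pos_of_adj hadj)
      exact ⟨x, hxI, SimpleGraph.Reachable.refl _, hA hxI⟩

theorem deg_pos_of_reach_ne {T : W.E → ℕ} {p q : W.V}
    (h : (W.sgraph T).Reachable p q) (hne : p ≠ q) : 0 < W.deg T p := by
  obtain ⟨w⟩ := h
  cases w with
  | nil => exact absurd rfl hne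
  | cons hadj _ => exact W.deg_pos_of_adj hadj


/-- Main transfer lemma: if `T₁ + C` satisfies the Euler conditions, so does `T₂ + C`. -/
theorem transfer (j : Fin W.n) (T₁ T₂ C C₂ : W.E → ℕ)
    (hs₁ : ∀ e ∉ W.edgesUpTo (j.val + 1) j.val, T₁ e = 0)
    (hs₂ : ∀ e ∉ W.edgesUpTo (j.val + 1) j.val, T₂ e = 0)
    (hsC : ∀ e ∈ W.edgesUpTo (j.val + 1) j.val, C e = 0)
    (hsC₂ : ∀ e ∈ W.edgesUpTo (j.val + 1) j.val, C₂ e = 0)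
    (htour₂ : W.IsTour (fun e => T₂ e + C₂ e))
    (hda : degClass (W.deg T₁ (W.aV j)) = degClass (W.deg T₂ (W.aV j)))
    (hdb : degClass (W.deg T₁ (W.bV j)) = degClass (W.deg T₂ (W.bV j)))
    (hcc : (W.numComp T₁ = 1 ∧ W.numComp T₂ = 1 ∧
             (0 < W.deg T₁ (W.aV j) ∨ 0 < W.deg T₁ (W.bV j)) ∧
             (0 < W.deg T₂ (W.aV j) ∨ 0 < W.deg T₂ (W.bV j))) ∨
           (W.numComp T₁ = 2 ∧ W.numComp T₂ = 2 ∧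
             W.SepComp T₁ (W.aV j) (W.bV j) ∧ W.SepComp T₂ (W.aV j) (W.bV j)))
    (hreq₁ : ∀ v, W.Required v → 0 < W.deg (fun e => T₁ e + C e) v)
    (heven₁ : ∀ v, Even (W.deg (fun e => T₁ e + C e) v))
    (hconn₁ : ∀ v w, 0 < W.deg (fun e => T₁ e + C e) v → 0 < W.deg (fun e => T₁ e + C e) w →
      (W.sgraph (fun e => T₁ e + C e)).Reachable v w) :
    (∀ v, W.Required v → 0 < W.deg (fun e => T₂ e + C e) v) ∧
    (∀ v, Even (W.deg (fun e => T₂ e + C e) v)) ∧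
    (∀ v w, 0 < W.deg (fun e => T₂ e + C e) v → 0 < W.deg (fun e => T₂ e + C e) w →
      (W.sgraph (fun e => T₂ e + C e)).Reachable v w) := by
  rw [W.isTour_iff] at htour₂
  obtain ⟨-, hreq₂', heven₂', -⟩ := htour₂
  simp only [W.deg_add] at hreq₁ heven₁ hconn₁ hreq₂' heven₂' ⊢
  set a := W.aV j with ha
  set b := W.bV j with hb
  have hI₁ : ∀ v, 0 < W.deg T₁ v → 0 < W.deg C v → v = a ∨ v = b :=
    fun v h1 h2 => W.interface_deg hs₁ hsC h1 h2
  have hreq : ∀ v, W.Required v → 0 < W.deg T₂ v + W.deg C v := by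
    intro v hv
    by_cases hCv : 0 < W.deg C v
    · omega
    · have hT1v : 0 < W.deg T₁ v := by have := hreq₁ v hv; omega
      by_cases hvI : v = a ∨ v = b
      · rcases hvI with rfl | rfl
        · have := (degClass_pos hda).1 hT1v; omega
        · have := (degClass_pos hdb).1 hT1v; omega
      · have h2 := hreq₂' v hv
        by_cases hT2v : 0 < W.deg T₂ v
        · omega
        · exfalso
          have hC2v : 0 < W.deg C₂ v := by omega
          exact hvI (W.interface_deg hs₁ hsC₂ hT1v hC2v)
  have heven : ∀ v, Even (W.deg T₂ v + W.deg C v) := by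
    intro v
    by_cases hvI : v = a ∨ v = b
    · have hpar : W.deg T₁ v % 2 = W.deg T₂ v % 2 := by
        rcases hvI with rfl | rfl
        · exact degClass_parity hda
        · exact degClass_parity hdb
      have h1 := heven₁ v
      rw [Nat.even_iff] at h1 ⊢
      omega
    · by_cases hCv : 0 < W.deg C v
      · have hT1v : W.deg T₁ v = 0 := by
          by_contra h
          exact hvI (W.interface_deg hs₁ hsC (Nat.pos_of_ne_zero h) hCv)
        have h1 := heven₁ v
        rw [hT1v] at h1
        have hT2v : W.deg T₂ v = 0 := by
          by_contra h
          exact hvI (W.interface_deg hs₂ hsC (Nat.pos_of_ne_zero h) hCv)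
        rw [hT2v]
        exact h1
      · by_cases hT2v : 0 < W.deg T₂ v
        · have hC2v : W.deg C₂ v = 0 := by
            by_contra h
            exact hvI (W.interface_deg hs₂ hsC₂ hT2v (Nat.pos_of_ne_zero h))
          have h2 := heven₂' v
          rw [Nat.even_iff] at h2 ⊢
          omega
        · rw [Nat.even_iff]
          omega
  refine ⟨hreq, heven, ?_⟩
  have hmonoT₂ : W.sgraph T₂ ≤ W.sgraph (fun e => T₂ e + C e) := W.sgraph_add_left T₂ C
  have hmonoC : W.sgraph C ≤ W.sgraph (fun e => T₂ e + C e) := W.sgraph_add_right T₂ C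
  rcases hcc with ⟨hc₁, hc₂, hp₁, hp₂⟩ | ⟨hc₁, hc₂, hsep₁, hsep₂⟩
  · -- one component containing a or b
    have hreach₂ := W.reach_of_numComp_one hc₂
    obtain ⟨r, hrI, hr₁, hr₂⟩ : ∃ r, (r = a ∨ r = b) ∧ 0 < W.deg T₁ r ∧ 0 < W.deg T₂ r := by
      rcases hp₁ with h | h
      · exact ⟨a, Or.inl rfl, h, (degClass_pos hda).1 h⟩
      · exact ⟨b, Or.inr rfl, h, (degClass_pos hdb).1 h⟩
    have hlift : ∀ p q, Relation.ReflTransGen (W.SRel T₁ C a b) p q →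
        (W.sgraph (fun e => T₂ e + C e)).Reachable p q := by
      intro p q hpq
      induction hpq with
      | refl => exact SimpleGraph.Reachable.refl _
      | @tail x z hxz hstep ihr =>
        refine ihr.trans ?_
        obtain ⟨hxI, hzI, hTC⟩ := hstep
        rcases hTC with hT | hC
        · rcases eq_or_ne x z with rfl | hne
          · exact SimpleGraph.Reachable.refl _
          · have hx1 : 0 < W.deg T₁ x := W.deg_pos_of_reach_ne hT hne
            have hz1 : 0 < W.deg T₁ z := W.deg_pos_of_reach_ne hT.symm hne.symm
            have hx2 : 0 < W.deg T₂ x := by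
              rcases hxI with rfl | rfl
              · exact (degClass_pos hda).1 hx1
              · exact (degClass_pos hdb).1 hx1
            have hz2 : 0 < W.deg T₂ z := by
              rcases hzI with rfl | rfl
              · exact (degClass_pos hda).1 hz1
              · exact (degClass_pos hdb).1 hz1
            exact SimpleGraph.Reachable.mono hmonoT₂ (hreach₂ x z hx2 hz2)
        · exact SimpleGraph.Reachable.mono hmonoC hC
    have hToR : ∀ v, 0 < W.deg T₂ v + W.deg C v →
        (W.sgraph (fun e => T₂ e + C e)).Reachable v r := by
      intro v hv
      by_cases hT2v : 0 < W.deg T₂ v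
      · exact SimpleGraph.Reachable.mono hmonoT₂ (hreach₂ v r hT2v hr₂)
      · have hCv : 0 < W.deg C v := by omega
        have hreach1 : (W.sgraph (fun e => T₁ e + C e)).Reachable v r :=
          hconn₁ v r (by omega) (by omega)
        obtain ⟨p, hpI, hvp, hrtg⟩ := (W.decomp hI₁ hrI v hreach1).2.2 hCv
        exact (SimpleGraph.Reachable.mono hmonoC hvp).trans (hlift p r hrtg)
    intro v w hv hw
    exact (hToR v hv).trans (hToR w hw).symm
  · -- two components separating a and b
    obtain ⟨ha₁, hb₁, hnab₁⟩ := hsep₁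
    obtain ⟨ha₂, hb₂, hnab₂⟩ := hsep₂
    have hreach2ab := W.reach_ab_of_numComp_two hc₂ ⟨ha₂, hb₂, hnab₂⟩
    have hCof : ∀ p q, Relation.ReflTransGen (W.SRel T₁ C a b) p q →
        (W.sgraph C).Reachable p q := by
      intro p q hpq
      induction hpq with
      | refl => exact SimpleGraph.Reachable.refl _
      | @tail x z hxz hstep ihr =>
        refine ihr.trans ?_
        obtain ⟨hxI, hzI, hTC⟩ := hstep
        rcases hTC with hT | hC
        · rcases eq_or_ne x z with rfl | hne
          · exact SimpleGraph.Reachable.refl _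
          · exfalso
            rcases hxI with rfl | rfl <;> rcases hzI with rfl | rfl
            · exact hne rfl
            · exact hnab₁ hT
            · exact hnab₁ hT.symm
            · exact hne rfl
        · exact hC
    have habC : (W.sgraph C).Reachable a b := by
      have hreach1 : (W.sgraph (fun e => T₁ e + C e)).Reachable a b :=
        hconn₁ a b (by omega) (by omega)
      exact hCof a b ((W.decomp hI₁ (Or.inr rfl) a hreach1).1 (Or.inl rfl))
    have habTC := SimpleGraph.Reachable.mono hmonoC habC
    have hToA : ∀ v, 0 < W.deg T₂ v + W.deg C v →
        (W.sgraph (fun e => T₂ e + C e)).Reachable v a := by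
      intro v hv
      by_cases hT2v : 0 < W.deg T₂ v
      · rcases hreach2ab v hT2v with h | h
        · exact SimpleGraph.Reachable.mono hmonoT₂ h
        · exact (SimpleGraph.Reachable.mono hmonoT₂ h).trans habTC.symm
      · have hCv : 0 < W.deg C v := by omega
        have hreach1 : (W.sgraph (fun e => T₁ e + C e)).Reachable v a :=
          hconn₁ v a (by omega) (by omega)
        obtain ⟨p, hpI, hvp, -⟩ := (W.decomp hI₁ (Or.inl rfl) v hreach1).2.2 hCv
        have h1 := SimpleGraph.Reachable.mono hmonoC hvp
        rcases hpI with rfl | rfl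
        · exact h1
        · exact h1.trans habTC.symm
    intro v w hv hw
    exact (hToA v hv).trans (hToA w hw).symm

end Warehouse

/-- Lemma 2 of Ratliff–Rosenthal: two `L_j` PTSs with the same degree
parities at `a_j`, `b_j` and matching connectivity structure are equivalent: any
completion of one completes the other. -/
theorem stmt1 (W : Warehouse) (j : Fin W.n)
    (T₁ T₂ : W.E → ℕ)
    (h₁ : W.IsPTS (W.edgesUpTo (j.val + 1) j.val) T₁)
    (h₂ : W.IsPTS (W.edgesUpTo (j.val + 1) j.val) T₂)
    (hda : degClass (W.deg T₁ (W.aV j)) = degClass (W.deg T₂ (W.aV j)))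
    (hdb : degClass (W.deg T₁ (W.bV j)) = degClass (W.deg T₂ (W.bV j)))
    (hcc : (W.numComp T₁ = 0 ∧ W.numComp T₂ = 0) ∨
           (W.numComp T₁ = 1 ∧ W.numComp T₂ = 1 ∧
             (0 < W.deg T₁ (W.aV j) ∨ 0 < W.deg T₁ (W.bV j)) ∧
             (0 < W.deg T₂ (W.aV j) ∨ 0 < W.deg T₂ (W.bV j))) ∨
           (W.numComp T₁ = 2 ∧ W.numComp T₂ = 2 ∧
             W.SepComp T₁ (W.aV j) (W.bV j) ∧ W.SepComp T₂ (W.aV j) (W.bV j))) :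
    W.EquivPTS (W.edgesUpTo (j.val + 1) j.val) T₁ T₂ := by
  intro C hCsub hCL
  rcases hcc with ⟨hz₁, hz₂⟩ | hcc'
  · have hT12 : T₁ = T₂ := funext fun e => by
      rw [W.eq_zero_of_numComp_zero hz₁ e, W.eq_zero_of_numComp_zero hz₂ e]
    rw [hT12]
  · have hsub2 : W.IsSub (fun e => T₂ e + C e) := by
      intro e
      show T₂ e + C e ≤ 2
      by_cases he : e ∈ W.edgesUpTo (j.val + 1) j.val
      · have := hCL e he; have := h₂.1 e; omega
      · have := h₂.2.1 e he; have := hCsub e; omega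
    have hsub1 : W.IsSub (fun e => T₁ e + C e) := by
      intro e
      show T₁ e + C e ≤ 2
      by_cases he : e ∈ W.edgesUpTo (j.val + 1) j.val
      · have := hCL e he; have := h₁.1 e; omega
      · have := h₁.2.1 e he; have := hCsub e; omega
    have hcc'' : (W.numComp T₂ = 1 ∧ W.numComp T₁ = 1 ∧
             (0 < W.deg T₂ (W.aV j) ∨ 0 < W.deg T₂ (W.bV j)) ∧
             (0 < W.deg T₁ (W.aV j) ∨ 0 < W.deg T₁ (W.bV j))) ∨
           (W.numComp T₂ = 2 ∧ W.numComp T₁ = 2 ∧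
             W.SepComp T₂ (W.aV j) (W.bV j) ∧ W.SepComp T₁ (W.aV j) (W.bV j)) := by
      rcases hcc' with ⟨u1, u2, u3, u4⟩ | ⟨u1, u2, u3, u4⟩
      · exact Or.inl ⟨u2, u1, u4, u3⟩
      · exact Or.inr ⟨u2, u1, u4, u3⟩
    constructor
    · intro ht1
      rw [W.isTour_iff] at ht1 ⊢
      obtain ⟨-, hreq1, heven1, hconn1⟩ := ht1
      obtain ⟨C₂, hC₂sub, hC₂L, htour₂⟩ := h₂.2.2
      have hres := W.transfer j T₁ T₂ C C₂ h₁.2.1 h₂.2.1 hCL hC₂L htour₂ hda hdb hcc'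
        hreq1 heven1 hconn1
      exact ⟨hsub2, hres.1, hres.2.1, hres.2.2⟩
    · intro ht2
      rw [W.isTour_iff] at ht2 ⊢
      obtain ⟨-, hreq2, heven2, hconn2⟩ := ht2
      obtain ⟨C₁, hC₁sub, hC₁L, htour₁⟩ := h₁.2.2
      have hres := W.transfer j T₂ T₁ C C₁ h₂.2.1 h₁.2.1 hCL hC₁L htour₁ hda.symm hdb.symm
        hcc'' hreq2 heven2 hconn2
      exact ⟨hsub1, hres.1, hres.2.1, hres.2.2⟩
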